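/- Let Q : ℕ → ℝ satisfy Q(n) = 4·Q(n/2) + 4·(n/2)·Q_2D(n/2) + 2·Q_MT(n/2) for n > 1 a power of 2 with Q(1) = O(1), where Q_2D(n) ≤ C·(n²/(BM) + P^{1/2} n (log n)/B + P (log n)²) and Q_MT(n) ≤ C·(n²/B + P (log n)²). Then Q(n) = O(n³/(BM) + P^{1/2} n² (log n)²/B + P·n^{log₂ 3}). -/

import Mathlib

set_option maxHeartbeats 800000

lemma nat_sq_le (n : ℕ) : n ^ 2 ≤ 2 ^ n * (n + 1) := by
  induction n with
  | zero => simp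
  | succ n ih =>
    have h := Nat.lt_two_pow_self (n := n)
    have e : 2 ^ (n+1) = 2 * 2 ^ n := by ring
    nlinarith [ih, h, e]

/-- Bound on the inhomogeneous part of the recurrence. -/
lemma gap_Ebound (B M P C L sP x n V W : ℝ) (hB : 1 ≤ B) (hM : 1 ≤ M) (hP : 1 ≤ P)
    (hC : 1 ≤ C) (hL0 : 0 < L) (hL1 : L ≤ 1) (hsP1 : 1 ≤ sP) (hsPP : sP ≤ P)
    (hx1 : 1 ≤ x) (hn0 : 0 ≤ n) (hnx : n ^ 2 ≤ x * (n + 1))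
    (h2 : V ≤ C * (x ^ 2 / (B * M) + sP * x * (n * L) / B + P * (n * L) ^ 2))
    (h3 : W ≤ C * (x ^ 2 / B + P * (n * L) ^ 2)) :
    4 * x * V + 2 * W ≤ 12 * C * P * (x ^ 3 / (B * M) + x ^ 2 * (n + 1)) := by
  have hB0 : (0:ℝ) < B := by linarith
  have hM0 : (0:ℝ) < M := by linarith
  have hP0 : (0:ℝ) < P := by linarith
  have hBM0 : (0:ℝ) < B * M := by positivity
  have hx0 : (0:ℝ) < x := by linarith
  have hsP0 : (0:ℝ) ≤ sP := by linarith
  have hd1 : sP * x * (n * L) / B ≤ P * x * n := by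
    calc sP * x * (n * L) / B ≤ sP * x * (n * L) := div_le_self (by positivity) hB
      _ = (sP * x * n) * L := by ring
      _ ≤ sP * x * n := mul_le_of_le_one_right (by positivity) hL1
      _ ≤ P * x * n :=
          mul_le_mul_of_nonneg_right (mul_le_mul_of_nonneg_right hsPP hx0.le) hn0
  have hd2 : P * (n * L) ^ 2 ≤ P * n ^ 2 := by
    have e : P * (n * L) ^ 2 = (P * n ^ 2) * L ^ 2 := by ring
    rw [e]
    have : L ^ 2 ≤ 1 := by nlinarith
    exact mul_le_of_le_one_right (by positivity) this
  have hd3 : x ^ 2 / B ≤ x ^ 2 := div_le_self (by positivity) hB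
  have hsum : sP * x * (n * L) / B + P * (n * L) ^ 2 ≤ 2 * P * (x * (n + 1)) := by
    have hb1 : P * n ^ 2 ≤ P * (x * (n + 1)) := mul_le_mul_of_nonneg_left hnx hP0.le
    have hb2 : P * x * n ≤ P * (x * (n + 1)) := by nlinarith
    linarith
  have hQ2 : V ≤ C * (x ^ 2 / (B * M)) + C * (2 * P * (x * (n + 1))) := by
    have e : C * (x ^ 2 / (B * M) + sP * x * (n * L) / B + P * (n * L) ^ 2)
        = C * (x ^ 2 / (B * M)) + C * (sP * x * (n * L) / B + P * (n * L) ^ 2) := by ring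
    rw [e] at h2
    have := mul_le_mul_of_nonneg_left hsum (by linarith : (0:ℝ) ≤ C)
    linarith
  have hsum3 : x ^ 2 / B + P * (n * L) ^ 2 ≤ 2 * P * (x ^ 2 * (n + 1)) := by
    have hb1 : P * n ^ 2 ≤ P * (x * (n + 1)) := mul_le_mul_of_nonneg_left hnx hP0.le
    have hb2 : P * (x * (n + 1)) ≤ P * (x ^ 2 * (n + 1)) := by
      have : x * (n + 1) ≤ x ^ 2 * (n + 1) := by nlinarith
      exact mul_le_mul_of_nonneg_left this hP0.le
    have hb3 : x ^ 2 ≤ P * (x ^ 2 * (n + 1)) := by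
      nlinarith [mul_nonneg (sq_nonneg x) (by nlinarith : (0:ℝ) ≤ P * (n + 1) - 1)]
    linarith
  have hQ3 : W ≤ C * (2 * P * (x ^ 2 * (n + 1))) := by
    have := mul_le_mul_of_nonneg_left hsum3 (by linarith : (0:ℝ) ≤ C)
    linarith
  have m1 : 4 * x * V ≤ 4 * x * (C * (x ^ 2 / (B * M)) + C * (2 * P * (x * (n + 1)))) :=
    mul_le_mul_of_nonneg_left hQ2 (by linarith)
  have m2 : 2 * W ≤ 2 * (C * (2 * P * (x ^ 2 * (n + 1)))) :=
    mul_le_mul_of_nonneg_left hQ3 (by norm_num)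
  have e2 : 4 * x * (C * (x ^ 2 / (B * M)) + C * (2 * P * (x * (n + 1))))
      + 2 * (C * (2 * P * (x ^ 2 * (n + 1))))
      = 4 * C * (x ^ 3 / (B * M)) + 12 * C * P * (x ^ 2 * (n + 1)) := by ring
  have e3 : 12 * C * P * (x ^ 3 / (B * M) + x ^ 2 * (n + 1))
      = 12 * C * P * (x ^ 3 / (B * M)) + 12 * C * P * (x ^ 2 * (n + 1)) := by ring
  have e4 : 4 * C * (x ^ 3 / (B * M)) ≤ 12 * C * P * (x ^ 3 / (B * M)) := by
    have h0 : (0:ℝ) ≤ x ^ 3 / (B * M) := by positivity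
    have hcc : (4 * C) ≤ 12 * C * P := by nlinarith
    exact mul_le_mul_of_nonneg_right hcc h0
  rw [e3]; linarith [m1, m2, e2.le, e2.ge]

/-- Arithmetic for the induction step. -/
lemma gap_step (C₀ K d x n A E : ℝ) (hd : 0 ≤ d) (hx : 0 ≤ x) (hn : 0 ≤ n)
    (hK : 0 < K) (hKC : K ≤ C₀)
    (hA : A ≤ C₀ * (d + x ^ 2 * (n ^ 2 + 1))) (hE : E ≤ K * (d + x ^ 2 * (n + 1))) :
    4 * A + E ≤ C₀ * (8 * d + 4 * x ^ 2 * ((n + 1) ^ 2 + 1)) := by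
  have hC₀0 : (0:ℝ) < C₀ := lt_of_lt_of_le hK hKC
  nlinarith [hA, hE, mul_nonneg (sub_nonneg.2 hKC) hd, mul_nonneg hC₀0.le hd,
    mul_nonneg (sub_nonneg.2 hKC) (mul_nonneg (sq_nonneg x) (by linarith : (0:ℝ) ≤ n + 1)),
    mul_nonneg hC₀0.le (mul_nonneg (sq_nonneg x) hn),
    mul_nonneg hC₀0.le (sq_nonneg x)]

/-- Conversion at indices `i ≥ 1`. -/
lemma gap_conv (C₀ B M P sP L x n T : ℝ) (hB : 1 ≤ B) (hM : 1 ≤ M) (hP : 1 ≤ P)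
    (hL0 : 0 < L) (hL1 : L ≤ 1) (hsP1 : 1 ≤ sP) (hC₀0 : 0 < C₀)
    (hx1 : 1 ≤ x) (hn1 : 1 ≤ n) (hT : 0 ≤ T) :
    C₀ * (x ^ 3 / (B * M) + x ^ 2 * (n ^ 2 + 1))
      ≤ C₀ * (1 + 2 * B) / L ^ 2 * (x ^ 3 / (B * M) + sP * x ^ 2 * (n * L) ^ 2 / B + P * T) := by
  have hB0 : (0:ℝ) < B := by linarith
  have hM0 : (0:ℝ) < M := by linarith
  have hx0 : (0:ℝ) < x := by linarith
  have hBM0 : (0:ℝ) < B * M := by positivity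
  have hcoef : (1:ℝ) ≤ (1 + 2 * B) / L ^ 2 := by
    rw [le_div_iff₀ (by positivity)]
    nlinarith
  have hterm1 : C₀ * (x ^ 3 / (B * M)) ≤ C₀ * (1 + 2 * B) / L ^ 2 * (x ^ 3 / (B * M)) := by
    have hnn : (0:ℝ) ≤ x ^ 3 / (B * M) := by positivity
    have e : C₀ * (1 + 2 * B) / L ^ 2 = C₀ * ((1 + 2 * B) / L ^ 2) := by ring
    rw [e]
    nlinarith [mul_le_mul_of_nonneg_left (mul_le_mul_of_nonneg_right hcoef hnn) hC₀0.le]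
  have hterm2 : C₀ * (x ^ 2 * (n ^ 2 + 1))
      ≤ C₀ * (1 + 2 * B) / L ^ 2 * (sP * x ^ 2 * (n * L) ^ 2 / B) := by
    rw [div_mul_div_comm, le_div_iff₀ (by positivity)]
    have hposx : (0:ℝ) ≤ C₀ * L ^ 2 * x ^ 2 := by positivity
    have hmid : 0 ≤ (1 + 2 * B) * sP * n ^ 2 - (n ^ 2 + 1) * B := by
      nlinarith [mul_nonneg (sub_nonneg.2 hsP1)
          (mul_nonneg (by linarith : (0:ℝ) ≤ 1 + 2 * B) (sq_nonneg n)),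
        mul_nonneg (by linarith : (0:ℝ) ≤ B) (by nlinarith : (0:ℝ) ≤ n ^ 2 - 1)]
    nlinarith [mul_nonneg hposx hmid]
  have hterm3 : (0:ℝ) ≤ C₀ * (1 + 2 * B) / L ^ 2 * (P * T) := by positivity
  have hexp : C₀ * (1 + 2 * B) / L ^ 2 * (x ^ 3 / (B * M) + sP * x ^ 2 * (n * L) ^ 2 / B + P * T)
      = C₀ * (1 + 2 * B) / L ^ 2 * (x ^ 3 / (B * M))
        + C₀ * (1 + 2 * B) / L ^ 2 * (sP * x ^ 2 * (n * L) ^ 2 / B)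
        + C₀ * (1 + 2 * B) / L ^ 2 * (P * T) := by ring
  have hexp2 : C₀ * (x ^ 3 / (B * M) + x ^ 2 * (n ^ 2 + 1))
      = C₀ * (x ^ 3 / (B * M)) + C₀ * (x ^ 2 * (n ^ 2 + 1)) := by ring
  rw [hexp, hexp2]
  linarith

/-- Conversion at index `0`. -/
lemma gap_conv0 (C₀ B M P L : ℝ) (hB : 1 ≤ B) (hM : 1 ≤ M) (hP : 1 ≤ P)
    (hL0 : 0 < L) (hL1 : L ≤ 1) (hC₀0 : 0 < C₀) :
    C₀ * (1 / (B * M) + 1) ≤ C₀ * (1 + 2 * B) / L ^ 2 * (1 / (B * M) + P) := by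
  have hB0 : (0:ℝ) < B := by linarith
  have hM0 : (0:ℝ) < M := by linarith
  have hBM0 : (0:ℝ) < B * M := by positivity
  have h1 : (0:ℝ) ≤ 1 / (B * M) := by positivity
  have hcoef : (1:ℝ) ≤ (1 + 2 * B) / L ^ 2 := by
    rw [le_div_iff₀ (by positivity)]
    nlinarith
  have e : C₀ * (1 + 2 * B) / L ^ 2 * (1 / (B * M) + P)
      = C₀ * ((1 + 2 * B) / L ^ 2) * (1 / (B * M)) + C₀ * ((1 + 2 * B) / L ^ 2) * P := by ring
  rw [e]
  have c1 : C₀ * (1 / (B * M)) ≤ C₀ * ((1 + 2 * B) / L ^ 2) * (1 / (B * M)) := by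
    nlinarith [mul_le_mul_of_nonneg_left (mul_le_mul_of_nonneg_right hcoef h1) hC₀0.le]
  have c2 : C₀ * 1 ≤ C₀ * ((1 + 2 * B) / L ^ 2) * P := by
    nlinarith [mul_le_mul_of_nonneg_left hcoef hC₀0.le, hC₀0]
  nlinarith [c1, c2]

theorem stmt13 (B M P C : ℝ) (hB : 1 ≤ B) (hM : 1 ≤ M) (hP : 1 ≤ P) (hC : 1 ≤ C)
    (Q2D QMT : ℕ → ℝ)
    (h2D : ∀ n : ℕ, 1 ≤ n → Q2D n ≤ C * ((n : ℝ) ^ 2 / (B * M)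
      + P ^ ((1 : ℝ) / 2) * (n : ℝ) * Real.log n / B
      + P * (Real.log n) ^ 2))
    (hMT : ∀ n : ℕ, 1 ≤ n → QMT n ≤ C * ((n : ℝ) ^ 2 / B + P * (Real.log n) ^ 2))
    (q : ℕ → ℝ)
    (hrec : ∀ i : ℕ, q (i + 1) =
      4 * q i + 4 * (2 : ℝ) ^ i * Q2D (2 ^ i) + 2 * QMT (2 ^ i)) :
    ∃ C' > 0, ∀ i : ℕ,
      q i ≤ C' * (((2 : ℝ) ^ i) ^ 3 / (B * M)
        + P ^ ((1 : ℝ) / 2) * ((2 : ℝ) ^ i) ^ 2 * (Real.log ((2 : ℝ) ^ i)) ^ 2 / B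
        + P * ((2 : ℝ) ^ i) ^ (Real.logb 2 3)) := by
  have hB0 : (0:ℝ) < B := by linarith
  have hM0 : (0:ℝ) < M := by linarith
  have hP0 : (0:ℝ) < P := by linarith
  have hBM0 : (0:ℝ) < B * M := by positivity
  set L : ℝ := Real.log 2 with hLdef
  have hL0 : 0 < L := Real.log_pos (by norm_num)
  have hL1 : L ≤ 1 := by have := Real.log_two_lt_d9; rw [hLdef]; linarith
  set sP : ℝ := P ^ ((1:ℝ)/2) with hsPdef
  have hsP1 : 1 ≤ sP := Real.one_le_rpow hP (by norm_num)
  have hsPP : sP ≤ P := by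
    rw [hsPdef]
    nth_rewrite 2 [← Real.rpow_one P]
    exact Real.rpow_le_rpow_of_exponent_le hP (by norm_num)
  set K : ℝ := 12 * C * P with hKdef
  have hK1 : 1 ≤ K := by nlinarith
  have hK0 : (0:ℝ) < K := by linarith
  set C₀ : ℝ := |q 0| + K with hC₀def
  have hC₀K : K ≤ C₀ := le_add_of_nonneg_left (abs_nonneg _)
  have hC₀1 : 1 ≤ C₀ := le_trans hK1 hC₀K
  have hC₀0 : (0:ℝ) < C₀ := lt_of_lt_of_le one_pos hC₀1
  -- bound on the inhomogeneous part
  have hE : ∀ i : ℕ, 4 * (2:ℝ)^i * Q2D (2^i) + 2 * QMT (2^i)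
      ≤ K * (((2:ℝ)^i)^3 / (B*M) + ((2:ℝ)^i)^2 * ((i:ℝ)+1)) := by
    intro i
    have h1 : (1:ℕ) ≤ 2^i := Nat.one_le_two_pow
    have h2 := h2D (2^i) h1
    have h3 := hMT (2^i) h1
    have hcast : ((2^i : ℕ) : ℝ) = (2:ℝ)^i := by push_cast; try ring
    rw [hcast] at h2 h3
    have hlog : Real.log ((2:ℝ)^i) = (i:ℝ) * L := by rw [Real.log_pow]
    rw [hlog] at h2 h3
    have hsq : ((i:ℝ))^2 ≤ (2:ℝ)^i * ((i:ℝ)+1) := by exact_mod_cast nat_sq_le i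
    have hx1 : (1:ℝ) ≤ (2:ℝ)^i := one_le_pow₀ one_le_two
    rw [hKdef]
    exact gap_Ebound B M P C L sP ((2:ℝ)^i) (i:ℝ) _ _ hB hM hP hC hL0 hL1 hsP1 hsPP
      hx1 (Nat.cast_nonneg i) hsq h2 h3
  -- main induction
  have key : ∀ i : ℕ, q i ≤ C₀ * (((2:ℝ)^i)^3/(B*M) + ((2:ℝ)^i)^2 * ((i:ℝ)^2+1)) := by
    intro i
    induction i with
    | zero =>
      simp only [pow_zero, Nat.cast_zero, one_pow]
      have habs : q 0 ≤ |q 0| := le_abs_self _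
      have h1 : (0:ℝ) ≤ 1/(B*M) := by positivity
      nlinarith [mul_nonneg hC₀0.le h1]
    | succ i ih =>
      have hEi := hE i
      have hx0 : (0:ℝ) ≤ (2:ℝ)^i := by positivity
      have hd0 : (0:ℝ) ≤ ((2:ℝ)^i)^3/(B*M) := by positivity
      rw [hrec i]
      calc 4 * q i + 4 * (2:ℝ)^i * Q2D (2^i) + 2 * QMT (2^i)
          ≤ 4 * q i + (4 * (2:ℝ)^i * Q2D (2^i) + 2 * QMT (2^i)) := by ring_nf; exact le_refl _
        _ ≤ C₀ * (8 * (((2:ℝ)^i)^3/(B*M)) + 4 * ((2:ℝ)^i)^2 * (((i:ℝ)+1)^2+1)) := by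
            have := gap_step C₀ K (((2:ℝ)^i)^3/(B*M)) ((2:ℝ)^i) (i:ℝ) (q i)
              (4 * (2:ℝ)^i * Q2D (2^i) + 2 * QMT (2^i)) hd0 hx0 (Nat.cast_nonneg i)
              hK0 hC₀K ih hEi
            linarith
        _ = C₀ * (((2:ℝ)^(i+1))^3/(B*M) + ((2:ℝ)^(i+1))^2 * (((i+1 : ℕ):ℝ)^2+1)) := by
            rw [pow_succ]; push_cast; ring
  -- convert to the target form
  refine ⟨C₀ * (1 + 2*B) / L^2, by positivity, fun i => ?_⟩
  have hpow3 : ((2:ℝ)^i) ^ (Real.logb 2 3) = 3 ^ i := by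
    rw [← Real.rpow_natCast 2 i, ← Real.rpow_mul (by norm_num), mul_comm,
      Real.rpow_mul (by norm_num), Real.rpow_logb (by norm_num) (by norm_num) (by norm_num)]
    rw [Real.rpow_natCast]
  have hlog : Real.log ((2:ℝ)^i) = (i:ℝ) * L := by rw [Real.log_pow]
  rw [hpow3, hlog]
  have hkey := key i
  rcases Nat.eq_zero_or_pos i with hi | hi
  · subst hi
    have h0 := gap_conv0 C₀ B M P L hB hM hP hL0 hL1 hC₀0
    have e1 : C₀ * (((2:ℝ)^0)^3/(B*M) + ((2:ℝ)^0)^2 * (((0:ℕ):ℝ)^2+1))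
        = C₀ * (1/(B*M) + 1) := by norm_num
    have e2 : C₀ * (1 + 2*B) / L^2 * (((2:ℝ)^0)^3/(B*M)
        + sP * ((2:ℝ)^0)^2 * (((0:ℕ):ℝ) * L)^2 / B + P * 3^0)
        = C₀ * (1 + 2*B) / L^2 * (1/(B*M) + P) := by norm_num
    rw [e1] at hkey
    rw [e2]
    linarith
  · have hn1 : (1:ℝ) ≤ (i:ℝ) := by exact_mod_cast hi
    have hx1 : (1:ℝ) ≤ (2:ℝ)^i := one_le_pow₀ one_le_two
    have hT : (0:ℝ) ≤ (3:ℝ)^i := by positivity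
    have := gap_conv C₀ B M P sP L ((2:ℝ)^i) (i:ℝ) ((3:ℝ)^i) hB hM hP hL0 hL1 hsP1
      hC₀0 hx1 hn1 hT
    linarith
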